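/- For every real $\mu > 0$, the radius of convergence of the power series $\sum_{k=0}^{\infty} f_k(\mu)\, w^k$ is exactly $1$. -/

import Mathlib

open Complex Finset

/-- The function `h_μ(w) = exp(μ · Log((1-w)/(1+w)))`, defined via the principal
branch of the complex logarithm. -/
noncomputable def h (μ : ℝ) (w : ℂ) : ℂ :=
  Complex.exp ((μ : ℂ) * Complex.log ((1 - w) / (1 + w)))

/-- `f k μ` is the `k`-th Taylor coefficient of `h μ` at `w = 0`,
i.e. `h_μ^{(k)}(0)/k!`. -/
noncomputable def f (μ : ℝ) (k : ℕ) : ℂ :=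
  iteratedDeriv k (h μ) 0 / (Nat.factorial k : ℂ)

lemma h_diff (μ : ℝ) : DifferentiableOn ℂ (h μ) (Metric.ball 0 1) := by
  intro w hw
  simp only [Metric.mem_ball, dist_zero_right] at hw
  have hne : (1 : ℂ) + w ≠ 0 := by
    intro hc
    have : w = -1 := by linear_combination hc
    rw [this] at hw; simp at hw
  have hre : 0 < ((1 - w) / (1 + w)).re := by
    rw [Complex.div_re]
    have h1 : 0 < Complex.normSq (1 + w) := Complex.normSq_pos.mpr hne
    have h2 : (1 - w).re * (1 + w).re + (1 - w).im * (1 + w).im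
        = 1 - Complex.normSq w := by
      simp [Complex.normSq_apply]; ring
    have h3 : Complex.normSq w < 1 := by
      have h4 := Complex.sq_norm w
      nlinarith [norm_nonneg w]
    rw [← add_div, h2]
    exact div_pos (by linarith) h1
  have hd : DifferentiableAt ℂ (fun w : ℂ => (1 - w) / (1 + w)) w := by
    exact DifferentiableAt.div (by fun_prop) (by fun_prop) hne
  have hlog : DifferentiableAt ℂ (fun w : ℂ => Complex.log ((1 - w) / (1 + w))) w :=
    hd.clog (Complex.mem_slitPlane_iff.mpr (Or.inl hre))
  exact ((hlog.const_mul ((μ : ℂ))).cexp).differentiableWithinAt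

lemma h_hasSum (μ : ℝ) {z : ℂ} (hz : z ∈ Metric.ball (0 : ℂ) 1) :
    HasSum (fun n => f μ n * z ^ n) (h μ z) := by
  have := Complex.hasSum_taylorSeries_on_ball (h_diff μ) hz
  simp only [sub_zero, smul_eq_mul] at this
  convert this using 2 with n
  · rfl
  rw [f]
  field_simp

lemma h_norm (μ : ℝ) {t : ℝ} (ht0 : 0 < t) (ht1 : t ≤ 1) :
    ‖h μ ((-1 + t : ℝ) : ℂ)‖ = ((2 - t) / t) ^ μ := by
  have hzpos : 0 < (2 - t) / t := div_pos (by linarith) ht0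
  have hz : (1 - ((-1 + t : ℝ) : ℂ)) / (1 + ((-1 + t : ℝ) : ℂ)) = (((2 - t) / t : ℝ) : ℂ) := by
    have hden : (1 : ℂ) + ((-1 + t : ℝ) : ℂ) = ((t : ℝ) : ℂ) := by push_cast; ring
    have hnum : (1 : ℂ) - ((-1 + t : ℝ) : ℂ) = ((2 - t : ℝ) : ℂ) := by push_cast; ring
    rw [hden, hnum, ← Complex.ofReal_div]
  rw [h, Complex.norm_exp, hz, Complex.re_ofReal_mul, Complex.log_re,
    Complex.norm_real, Real.norm_eq_abs, _root_.abs_of_pos hzpos, Real.rpow_def_of_pos hzpos, mul_comm]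

/-- For every real `μ > 0`, the radius of convergence of `∑ₖ f_k(μ) wᵏ` is exactly `1`. -/
theorem f_series_radius (μ : ℝ) (hμ : 0 < μ) :
    (FormalMultilinearSeries.ofScalars ℂ (f μ)).radius = 1 := by
  set p := FormalMultilinearSeries.ofScalars ℂ (f μ) with hp
  have hr_le : (1 : ENNReal) ≤ p.radius := by
    apply ENNReal.le_of_forall_nnreal_lt
    intro r hr
    have hr1 : (r : ℝ) < 1 := by exact_mod_cast hr
    have hmem : ((r : ℝ) : ℂ) ∈ Metric.ball (0 : ℂ) 1 := by
      rw [Metric.mem_ball, dist_zero_right, Complex.norm_real, Real.norm_eq_abs,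
        _root_.abs_of_nonneg r.coe_nonneg]
      exact hr1
    have hs := (h_hasSum μ hmem).summable.tendsto_atTop_zero
    apply p.le_radius_of_tendsto (l := 0)
    have : (fun n => ‖p n‖ * (r : ℝ) ^ n) = fun n => ‖f μ n * ((r : ℝ) : ℂ) ^ n‖ := by
      funext n
      rw [hp, FormalMultilinearSeries.ofScalars_norm, norm_mul, norm_pow]
      rw [Complex.norm_real, Real.norm_eq_abs, _root_.abs_of_nonneg r.coe_nonneg]
    rw [this]
    exact (tendsto_zero_iff_norm_tendsto_zero.mp hs)
  have hball : HasFPowerSeriesOnBall (h μ) p 0 1 := by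
    refine ⟨hr_le, one_pos, fun {y} hy => ?_⟩
    rw [zero_add]
    have hy' : y ∈ Metric.ball (0 : ℂ) 1 := by
      have e := @Metric.eball_coe ℂ _ 0 1; rw [ENNReal.coe_one, NNReal.coe_one] at e; rw [← e]; exact hy
    have := h_hasSum μ hy'
    convert this using 2 with n
    · rfl
    rw [hp, FormalMultilinearSeries.ofScalars_apply_eq]
    simp [smul_eq_mul, mul_comm]
  refine le_antisymm ?_ hr_le
  by_contra hlt
  push_neg at hlt
  have hrpos : 0 < p.radius := lt_trans one_pos hlt
  have hsum := p.hasFPowerSeriesOnBall hrpos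
  have hcont : ContinuousAt p.sum (-1) := by
    have hmem : (-1 : ℂ) ∈ Metric.eball (0 : ℂ) p.radius := by
      simp only [Metric.mem_eball, edist_zero_right]
      simpa using hlt
    exact (hsum.continuousOn.continuousAt (EMetric.isOpen_ball.mem_nhds hmem))
  set w : ℕ → ℂ := fun n => -1 + (1 / (n + 1) : ℝ) with hw
  have hwtend : Filter.Tendsto w Filter.atTop (nhds (-1)) := by
    rw [hw]
    have : Filter.Tendsto (fun n : ℕ => ((1 / (n + 1) : ℝ) : ℂ)) Filter.atTop (nhds 0) := by
      rw [← Complex.ofReal_zero]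
      exact (tendsto_one_div_add_atTop_nhds_zero_nat).comp (by exact Filter.tendsto_id) |>.ofReal
    simpa using (tendsto_const_nhds.add this)
  have hwmem : ∀ n, w n ∈ Metric.ball (0 : ℂ) 1 := by
    intro n
    have h0 : (0 : ℝ) < 1 / (n + 1 : ℝ) := by positivity
    have h1 : 1 / (n + 1 : ℝ) ≤ 1 := by
      rw [div_le_one (by positivity)]; linarith [Nat.cast_nonneg (α := ℝ) n]
    simp only [Metric.mem_ball, dist_zero_right, hw]
    have : (-1 + ((1 / (n + 1) : ℝ) : ℂ)) = (((1 / (n + 1) : ℝ) - 1 : ℝ) : ℂ) := by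
      push_cast; ring
    rw [this, Complex.norm_real, Real.norm_eq_abs, _root_.abs_of_nonpos (by linarith)]
    linarith
  have hval : ∀ n, p.sum (w n) = h μ (w n) := by
    intro n
    have hmem : w n ∈ Metric.eball (0 : ℂ) 1 := by
      rw [← ENNReal.coe_one, Metric.eball_coe]; exact_mod_cast hwmem n
    have := hball.sum hmem
    rw [zero_add] at this
    exact this.symm
  have hnorm : ∀ n : ℕ, ((n : ℝ) + 1) ^ μ ≤ ‖h μ (w n)‖ := by
    intro n
    have ht0 : (0 : ℝ) < 1 / ((n : ℝ) + 1) := by positivity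
    have ht1 : 1 / ((n : ℝ) + 1) ≤ 1 := by
      rw [div_le_one (by positivity)]; linarith [Nat.cast_nonneg (α := ℝ) n]
    have hwn : w n = ((-1 + 1 / ((n : ℝ) + 1) : ℝ) : ℂ) := by rw [hw]; push_cast; ring
    rw [hwn, h_norm μ ht0 ht1]
    apply Real.rpow_le_rpow (by positivity) _ hμ.le
    rw [le_div_iff₀ ht0]
    have hmul : ((n : ℝ) + 1) * (1 / ((n : ℝ) + 1)) = 1 := by
      field_simp
    rw [hmul]
    linarith
  have htends : Filter.Tendsto (fun n => ‖h μ (w n)‖) Filter.atTop Filter.atTop := by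
    apply Filter.tendsto_atTop_mono hnorm
    have h1 : Filter.Tendsto (fun n : ℕ => (n : ℝ) + 1) Filter.atTop Filter.atTop :=
      Filter.tendsto_atTop_add_const_right _ 1 tendsto_natCast_atTop_atTop
    exact (tendsto_rpow_atTop hμ).comp h1
  have hlim : Filter.Tendsto (fun n => ‖h μ (w n)‖) Filter.atTop (nhds ‖p.sum (-1)‖) := by
    have : Filter.Tendsto (fun n => p.sum (w n)) Filter.atTop (nhds (p.sum (-1))) :=
      hcont.tendsto.comp hwtend
    have heq : (fun n => ‖h μ (w n)‖) = fun n => ‖p.sum (w n)‖ := by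
      funext n; rw [hval n]
    rw [heq]
    exact this.norm
  exact not_tendsto_atTop_of_tendsto_nhds hlim htends
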